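/- Under conditional independence of the views given Y ∈ {0,1}, with noise parameters α = P[Y=0|Ŷ=1], γ = P[Y=1|Ŷ=0], α+γ < 1, P[Ŷ=y]>0 for y∈{0,1}: if f̂ minimizes empirical balanced error on the pseudolabeled sample and f̂* minimizes population balanced error on Ŷ, and the uniform deviation bound sup_f |êrr_bal(f,T) − err_bal(f,Ŷ)| ≤ ε holds (for ε from the VC bound with effective sample size n·P[Ŷ≠∅]·min_y P[Ŷ=y|Ŷ≠∅]), then err_bal(f̂,Y) − inf_{f∈F} err_bal(f,Y) ≤ 2ε/(1−α−γ). -/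

import Mathlib

open MeasureTheory ProbabilityTheory

lemma condToReal {Ω : Type*} [MeasurableSpace Ω] (μ : Measure Ω) [IsFiniteMeasure μ]
    {s : Set Ω} (hms : MeasurableSet s) (t : Set Ω) :
    (μ[t|s]).toReal = (μ (s ∩ t)).toReal / (μ s).toReal := by
  rw [cond_apply hms, ENNReal.toReal_mul, ENNReal.toReal_inv]
  ring

lemma toReal_ne_zero' {Ω : Type*} [MeasurableSpace Ω] (μ : Measure Ω) [IsFiniteMeasure μ]
    {s : Set Ω} (hs : μ s ≠ 0) : (μ s).toReal ≠ 0 :=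
  ENNReal.toReal_ne_zero.mpr ⟨hs, measure_ne_top μ s⟩

/-- Law of total probability under conditional independence. -/
lemma mixLemma {Ω : Type*} [MeasurableSpace Ω] (μ : Measure Ω) [IsProbabilityMeasure μ]
    {H E T : Set Ω} (hH : MeasurableSet H) (hE : MeasurableSet E) (hT : MeasurableSet T)
    (hμH : μ H ≠ 0) (hμT : μ T ≠ 0) (hμTc : μ Tᶜ ≠ 0)
    (h1 : μ[H ∩ E | T] = μ[H|T] * μ[E|T])
    (h2 : μ[H ∩ E | Tᶜ] = μ[H|Tᶜ] * μ[E|Tᶜ]) :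
    (μ[E|H]).toReal = (μ[T|H]).toReal * (μ[E|T]).toReal
      + (μ[Tᶜ|H]).toReal * (μ[E|Tᶜ]).toReal := by
  have pT := toReal_ne_zero' μ hμT
  have pTc := toReal_ne_zero' μ hμTc
  have pH := toReal_ne_zero' μ hμH
  have e1 : (μ (T ∩ (H ∩ E))).toReal
      = (μ (T ∩ H)).toReal * (μ (T ∩ E)).toReal / (μ T).toReal := by
    have := congrArg ENNReal.toReal h1
    rw [ENNReal.toReal_mul, condToReal μ hT, condToReal μ hT, condToReal μ hT] at this
    field_simp at this
    field_simp
    linear_combination this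
  have e2 : (μ (Tᶜ ∩ (H ∩ E))).toReal
      = (μ (Tᶜ ∩ H)).toReal * (μ (Tᶜ ∩ E)).toReal / (μ Tᶜ).toReal := by
    have := congrArg ENNReal.toReal h2
    rw [ENNReal.toReal_mul, condToReal μ hT.compl, condToReal μ hT.compl,
      condToReal μ hT.compl] at this
    field_simp at this
    field_simp
    linear_combination this
  have split : (μ (T ∩ (H ∩ E))).toReal + (μ (Tᶜ ∩ (H ∩ E))).toReal = (μ (H ∩ E)).toReal := by
    rw [← ENNReal.toReal_add (measure_ne_top _ _) (measure_ne_top _ _)]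
    congr 1
    rw [Set.inter_comm T, Set.inter_comm Tᶜ]
    have := measure_inter_add_diff (μ := μ) (H ∩ E) hT
    rwa [Set.diff_eq] at this
  have hHT : (μ (H ∩ T)).toReal = (μ (T ∩ H)).toReal := by rw [Set.inter_comm]
  have hHTc : (μ (H ∩ Tᶜ)).toReal = (μ (Tᶜ ∩ H)).toReal := by rw [Set.inter_comm]
  rw [condToReal μ hH, condToReal μ hH, condToReal μ hH, condToReal μ hT, condToReal μ hT.compl,
    hHT, hHTc, ← split, e1, e2]
  field_simp

/-- conditional probabilities of complementary events sum to 1 -/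
lemma condCompl {Ω : Type*} [MeasurableSpace Ω] (μ : Measure Ω) [IsProbabilityMeasure μ]
    {H T : Set Ω} (hH : MeasurableSet H) (hT : MeasurableSet T) (hμH : μ H ≠ 0) :
    (μ[T|H]).toReal + (μ[Tᶜ|H]).toReal = 1 := by
  have pH := toReal_ne_zero' μ hμH
  rw [condToReal μ hH, condToReal μ hH]
  have : (μ (H ∩ T)).toReal + (μ (H ∩ Tᶜ)).toReal = (μ H).toReal := by
    rw [← ENNReal.toReal_add (measure_ne_top _ _) (measure_ne_top _ _)]
    congr 1
    have := measure_inter_add_diff (μ := μ) H hT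
    rwa [Set.diff_eq] at this
  field_simp
  linarith


/-- Main theorem (Theorem 1 of the paper, abstract form): under conditional independence of
the two views given `Y`, with noise parameters `α + γ < 1` and non-degenerate pseudolabels,
if `f̂` minimizes the empirical balanced error on the pseudolabeled sample, `f̂*` minimizes the
population balanced error on `Ŷ` over `F`, and the uniform deviation bound
`sup_{f ∈ F} |êrr_bal(f) − err_bal(f,Ŷ)| ≤ ε` holds, then
`err_bal(f̂,Y) − inf_{f∈F} err_bal(f,Y) ≤ 2ε/(1−α−γ)`. -/
theorem stmt_18 {Ω 𝓧₀ 𝓧₁ : Type*} [MeasurableSpace Ω] [MeasurableSpace 𝓧₀] [MeasurableSpace 𝓧₁]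
    (μ : Measure Ω) [IsProbabilityMeasure μ]
    (X₀ : Ω → 𝓧₀) (X₁ : Ω → 𝓧₁) (Y : Ω → Bool)
    (hX₀ : Measurable X₀) (hX₁ : Measurable X₁) (hY : Measurable Y)
    (hCI : ∀ (A : Set 𝓧₀) (B : Set 𝓧₁), MeasurableSet A → MeasurableSet B → ∀ y : Bool,
      μ[X₀ ⁻¹' A ∩ X₁ ⁻¹' B | Y ⁻¹' {y}] =
        μ[X₀ ⁻¹' A | Y ⁻¹' {y}] * μ[X₁ ⁻¹' B | Y ⁻¹' {y}])
    (Yhat : 𝓧₀ → Option Bool)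
    (hYhat : ∀ o : Option Bool, MeasurableSet (Yhat ⁻¹' {o}))
    (hY0 : μ (Y ⁻¹' {false}) ≠ 0) (hY1 : μ (Y ⁻¹' {true}) ≠ 0)
    (hYhat0 : μ ((fun ω => Yhat (X₀ ω)) ⁻¹' {some false}) ≠ 0)
    (hYhat1 : μ ((fun ω => Yhat (X₀ ω)) ⁻¹' {some true}) ≠ 0)
    (α γ : ℝ)
    (hα : α = (μ[Y ⁻¹' {false} | (fun ω => Yhat (X₀ ω)) ⁻¹' {some true}]).toReal)
    (hγ : γ = (μ[Y ⁻¹' {true} | (fun ω => Yhat (X₀ ω)) ⁻¹' {some false}]).toReal)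
    (hαγ : α + γ < 1)
    -- balanced errors on the true labels and on the pseudolabels
    (errY errHat : (𝓧₁ → Bool) → ℝ)
    (herrY : ∀ g : 𝓧₁ → Bool, errY g =
      (1 / 2) * ((μ[{ω | g (X₁ ω) = false} | Y ⁻¹' {true}]).toReal +
        (μ[{ω | g (X₁ ω) = true} | Y ⁻¹' {false}]).toReal))
    (herrHat : ∀ g : 𝓧₁ → Bool, errHat g =
      (1 / 2) * ((μ[{ω | g (X₁ ω) = false} | (fun ω => Yhat (X₀ ω)) ⁻¹' {some true}]).toReal +
        (μ[{ω | g (X₁ ω) = true} | (fun ω => Yhat (X₀ ω)) ⁻¹' {some false}]).toReal))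
    -- hypothesis class, ERM on the empirical balanced pseudolabel risk `errEmp`,
    -- population pseudolabel risk minimizer, and the uniform deviation bound
    (F : Set (𝓧₁ → Bool)) (hFmeas : ∀ g ∈ F, Measurable g)
    (errEmp : (𝓧₁ → Bool) → ℝ)
    (fhat fstar : 𝓧₁ → Bool) (hfhatF : fhat ∈ F) (hfstarF : fstar ∈ F)
    (hERM : ∀ g ∈ F, errEmp fhat ≤ errEmp g)
    (hstar : ∀ g ∈ F, errHat fstar ≤ errHat g)
    (ε : ℝ) (hε : 0 ≤ ε)
    (hdev : ∀ g ∈ F, |errEmp g - errHat g| ≤ ε) :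
    errY fhat - sInf (errY '' F) ≤ 2 * ε / (1 - α - γ) := by
  have hTc : Y ⁻¹' {false} = (Y ⁻¹' {true})ᶜ := by
    ext ω; simp [Set.mem_preimage]
  have hmT : MeasurableSet (Y ⁻¹' {true}) := hY (measurableSet_singleton true)
  have hmH1 : MeasurableSet ((fun ω => Yhat (X₀ ω)) ⁻¹' {some true}) :=
    hX₀ (hYhat (some true))
  have hmH0 : MeasurableSet ((fun ω => Yhat (X₀ ω)) ⁻¹' {some false}) :=
    hX₀ (hYhat (some false))
  have hμTc : μ (Y ⁻¹' {true})ᶜ ≠ 0 := by rw [← hTc]; exact hY0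
  have key : ∀ g : 𝓧₁ → Bool, Measurable g →
      errHat g = (1 - α - γ) * errY g + (α + γ) / 2 := by
    intro g hg
    have hmEf : MeasurableSet {ω | g (X₁ ω) = false} :=
      hX₁ (hg (measurableSet_singleton false))
    have hmEt : MeasurableSet {ω | g (X₁ ω) = true} :=
      hX₁ (hg (measurableSet_singleton true))
    have hEc : ({ω | g (X₁ ω) = false} : Set Ω)ᶜ = {ω | g (X₁ ω) = true} := by
      ext ω; simp
    have hEc' : ({ω | g (X₁ ω) = true} : Set Ω)ᶜ = {ω | g (X₁ ω) = false} := by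
      ext ω; simp
    -- CI instances
    have h1f : μ[((fun ω => Yhat (X₀ ω)) ⁻¹' {some true}) ∩ {ω | g (X₁ ω) = false}
        | Y ⁻¹' {true}] =
        μ[(fun ω => Yhat (X₀ ω)) ⁻¹' {some true} | Y ⁻¹' {true}] *
          μ[{ω | g (X₁ ω) = false} | Y ⁻¹' {true}] :=
      hCI (Yhat ⁻¹' {some true}) (g ⁻¹' {false}) (hYhat _)
        (hg (measurableSet_singleton false)) true
    have h1fc : μ[((fun ω => Yhat (X₀ ω)) ⁻¹' {some true}) ∩ {ω | g (X₁ ω) = false}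
        | (Y ⁻¹' {true})ᶜ] =
        μ[(fun ω => Yhat (X₀ ω)) ⁻¹' {some true} | (Y ⁻¹' {true})ᶜ] *
          μ[{ω | g (X₁ ω) = false} | (Y ⁻¹' {true})ᶜ] := by
      have := hCI (Yhat ⁻¹' {some true}) (g ⁻¹' {false}) (hYhat _)
        (hg (measurableSet_singleton false)) false
      rwa [hTc] at this
    have h0t : μ[((fun ω => Yhat (X₀ ω)) ⁻¹' {some false}) ∩ {ω | g (X₁ ω) = true}
        | Y ⁻¹' {true}] =
        μ[(fun ω => Yhat (X₀ ω)) ⁻¹' {some false} | Y ⁻¹' {true}] *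
          μ[{ω | g (X₁ ω) = true} | Y ⁻¹' {true}] :=
      hCI (Yhat ⁻¹' {some false}) (g ⁻¹' {true}) (hYhat _)
        (hg (measurableSet_singleton true)) true
    have h0tc : μ[((fun ω => Yhat (X₀ ω)) ⁻¹' {some false}) ∩ {ω | g (X₁ ω) = true}
        | (Y ⁻¹' {true})ᶜ] =
        μ[(fun ω => Yhat (X₀ ω)) ⁻¹' {some false} | (Y ⁻¹' {true})ᶜ] *
          μ[{ω | g (X₁ ω) = true} | (Y ⁻¹' {true})ᶜ] := by
      have := hCI (Yhat ⁻¹' {some false}) (g ⁻¹' {true}) (hYhat _)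
        (hg (measurableSet_singleton true)) false
      rwa [hTc] at this
    have mix1 := mixLemma μ hmH1 hmEf hmT hYhat1 hY1 hμTc h1f h1fc
    have mix0 := mixLemma μ hmH0 hmEt hmT hYhat0 hY1 hμTc h0t h0tc
    -- complement facts
    have cα := condCompl μ hmH1 hmT hYhat1
    have cγ := condCompl μ hmH0 hmT hYhat0
    have cE1 := condCompl μ hmT hmEf hY1
    have cE0 := condCompl μ hmT.compl hmEf hμTc
    rw [hEc] at cE1 cE0
    have hα' : α = (μ[(Y ⁻¹' {true})ᶜ | (fun ω => Yhat (X₀ ω)) ⁻¹' {some true}]).toReal := by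
      rw [hα, hTc]
    have hγ' : γ = (μ[Y ⁻¹' {true} | (fun ω => Yhat (X₀ ω)) ⁻¹' {some false}]).toReal := hγ
    have hp : (μ[Y ⁻¹' {true} | (fun ω => Yhat (X₀ ω)) ⁻¹' {some true}]).toReal = 1 - α := by
      rw [hα']; linarith
    have hs : (μ[(Y ⁻¹' {true})ᶜ | (fun ω => Yhat (X₀ ω)) ⁻¹' {some false}]).toReal = 1 - γ := by
      rw [hγ']; linarith
    have hE0f : (μ[{ω | g (X₁ ω) = false} | (Y ⁻¹' {true})ᶜ]).toReal =
        1 - (μ[{ω | g (X₁ ω) = true} | (Y ⁻¹' {true})ᶜ]).toReal := by linarith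
    have hE1t : (μ[{ω | g (X₁ ω) = true} | Y ⁻¹' {true}]).toReal =
        1 - (μ[{ω | g (X₁ ω) = false} | Y ⁻¹' {true}]).toReal := by linarith
    rw [hp, ← hα', hE0f] at mix1
    rw [hs, hE1t, ← hγ'] at mix0
    rw [herrHat g, herrY g, hTc, mix1, mix0]
    ring
  have hpos : (0:ℝ) < 1 - α - γ := by linarith
  have chain : ∀ g ∈ F, errY fhat ≤ errY g + 2 * ε / (1 - α - γ) := by
    intro g hgF
    have h1 := key fhat (hFmeas _ hfhatF)
    have h2 := key g (hFmeas _ hgF)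
    have d1 := abs_le.mp (hdev fhat hfhatF)
    have d2 := abs_le.mp (hdev g hgF)
    have e : errHat fhat ≤ errHat g + 2 * ε := by
      have := hERM g hgF
      linarith [d1.1, d1.2, d2.1, d2.2]
    have : errY fhat - errY g ≤ 2 * ε / (1 - α - γ) :=
      (le_div_iff₀ hpos).mpr (by nlinarith)
    linarith
  have hne : (errY '' F).Nonempty := ⟨errY fhat, ⟨fhat, hfhatF, rfl⟩⟩
  have hlb : errY fhat - 2 * ε / (1 - α - γ) ≤ sInf (errY '' F) := by
    refine le_csInf hne ?_
    rintro b ⟨g, hg, rfl⟩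
    linarith [chain g hg]
  linarith
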